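/- arXiv:1304.2444 — 2 statements merged into one kernel-verified Lean document; each statement's English description precedes it below -/
import Mathlib

section
/- If finite random variables U, X, Y satisfy both Markov chains U → X → Y and X → U → Y, then there exist functions f of U and g of X such that P(f(U) = g(X)) = 1 and X → g(X) → Y is a Markov chain. -/
open scoped Classical
open Finset Real

noncomputable section

variable {Ω : Type*} [Fintype Ω]

/-- Pushforward probability of value `x` under random variable `X` w.r.t. pmf `p`. -/
def dist' {α : Type*} (p : Ω → ℝ) (X : Ω → α) (x : α) : ℝ :=
  ∑ ω, if X ω = x then p ω else 0

/-- Shannon entropy, base 2. -/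
def ent {α : Type*} [Fintype α] (p : Ω → ℝ) (X : Ω → α) : ℝ :=
  -∑ x, dist' p X x * Real.logb 2 (dist' p X x)

/-- Conditional entropy `H(X | Y)`. -/
def condEnt {α β : Type*} [Fintype α] [Fintype β] (p : Ω → ℝ) (X : Ω → α) (Y : Ω → β) : ℝ :=
  ent p (fun ω => (X ω, Y ω)) - ent p Y

/-- Mutual information `I(X ∧ Y)`. -/
def mi {α β : Type*} [Fintype α] [Fintype β] (p : Ω → ℝ) (X : Ω → α) (Y : Ω → β) : ℝ :=
  ent p X + ent p Y - ent p (fun ω => (X ω, Y ω))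

/-- Conditional mutual information `I(X ∧ Y | Z)`. -/
def cmi {α β γ : Type*} [Fintype α] [Fintype β] [Fintype γ]
    (p : Ω → ℝ) (X : Ω → α) (Y : Ω → β) (Z : Ω → γ) : ℝ :=
  ent p (fun ω => (X ω, Z ω)) + ent p (fun ω => (Y ω, Z ω))
    - ent p (fun ω => ((X ω, Y ω), Z ω)) - ent p Z

/-- `p` is a probability mass function on `Ω`. -/
def IsPMF (p : Ω → ℝ) : Prop := (∀ ω, 0 ≤ p ω) ∧ ∑ ω, p ω = 1


section helperlemmas
variable {α β γ : Type*} (p : Ω → ℝ)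

lemma dist'_nonneg (hp : ∀ ω, 0 ≤ p ω) (X : Ω → α) (x : α) : 0 ≤ dist' p X x :=
  Finset.sum_nonneg fun ω _ => by split <;> simp [hp ω]

lemma dist'_comp [Fintype α] (X : Ω → α) (F : α → β) (b : β) :
    dist' p (fun ω => F (X ω)) b = ∑ a, if F a = b then dist' p X a else 0 := by
  have h : ∀ a, (if F a = b then dist' p X a else 0)
      = ∑ ω, if X ω = a ∧ F a = b then p ω else 0 := by
    intro a; unfold dist'; split_ifs with h <;> simp [h]
  simp only [h]
  rw [Finset.sum_comm]
  unfold dist'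
  refine Finset.sum_congr rfl fun ω _ => ?_
  simp [ite_and, Finset.sum_ite_eq, Finset.sum_ite_eq']

lemma sum_dist' [Fintype α] (X : Ω → α) : ∑ a, dist' p X a = ∑ ω, p ω := by
  unfold dist'; rw [Finset.sum_comm]
  exact Finset.sum_congr rfl fun ω _ => by simp

lemma dist'_swap (A : Ω → α) (B : Ω → β) (a : α) (b : β) :
    dist' p (fun ω => (A ω, B ω)) (a, b) = dist' p (fun ω => (B ω, A ω)) (b, a) := by
  unfold dist'
  refine Finset.sum_congr rfl fun ω _ => ?_
  have h' : ((A ω, B ω) = (a, b)) ↔ ((B ω, A ω) = (b, a)) := by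
    simp only [Prod.ext_iff]; tauto
  split_ifs with hc hd hd <;>
    first
      | rfl
      | exact absurd (h'.mp hc) hd
      | exact absurd (h'.mpr hd) hc

lemma dist'_reorder (A : Ω → α) (B : Ω → β) (C : Ω → γ) (a : α) (b : β) (c : γ) :
    dist' p (fun ω => ((A ω, B ω), C ω)) ((a, b), c)
      = dist' p (fun ω => ((C ω, B ω), A ω)) ((c, b), a) := by
  unfold dist'
  refine Finset.sum_congr rfl fun ω _ => ?_
  have h' : (((A ω, B ω), C ω) = ((a, b), c)) ↔ (((C ω, B ω), A ω) = ((c, b), a)) := by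
    simp only [Prod.ext_iff]; tauto
  split_ifs with hc hd hd <;>
    first
      | rfl
      | exact absurd (h'.mp hc) hd
      | exact absurd (h'.mpr hd) hc

lemma single_le_dist' (hp : ∀ ω, 0 ≤ p ω) (X : Ω → α) (ω₀ : Ω) :
    p ω₀ ≤ dist' p X (X ω₀) := by
  have := Finset.single_le_sum (f := fun ω => if X ω = X ω₀ then p ω else 0)
    (fun ω _ => by split <;> simp [hp ω]) (Finset.mem_univ ω₀)
  simpa [dist'] using this

lemma dist'_pair_le_left (hp : ∀ ω, 0 ≤ p ω) (A : Ω → α) (B : Ω → β) (a : α) (b : β) :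
    dist' p (fun ω => (A ω, B ω)) (a, b) ≤ dist' p A a := by
  refine Finset.sum_le_sum fun ω _ => ?_
  by_cases h : (A ω, B ω) = (a, b)
  · rw [if_pos h, if_pos (congrArg Prod.fst h)]
  · rw [if_neg h]; split <;> simp [hp ω]

lemma dist'_pair_le_right (hp : ∀ ω, 0 ≤ p ω) (A : Ω → α) (B : Ω → β) (a : α) (b : β) :
    dist' p (fun ω => (A ω, B ω)) (a, b) ≤ dist' p B b := by
  rw [dist'_swap]; exact dist'_pair_le_left p hp B A b a

lemma marg_snd [Fintype β] (A : Ω → α) (B : Ω → β) (a : α) :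
    ∑ b, dist' p (fun ω => (A ω, B ω)) (a, b) = dist' p A a := by
  unfold dist'
  rw [Finset.sum_comm]
  refine Finset.sum_congr rfl fun ω _ => ?_
  simp [Prod.ext_iff, ite_and, Finset.sum_ite_eq, Finset.sum_ite_eq']

lemma marg_fst [Fintype α] (A : Ω → α) (B : Ω → β) (b : β) :
    ∑ a, dist' p (fun ω => (A ω, B ω)) (a, b) = dist' p B b := by
  simp_rw [dist'_swap p A B]
  exact marg_snd p B A b

lemma marg3_snd [Fintype β] (A : Ω → α) (B : Ω → β) (C : Ω → γ) (a : α) (c : γ) :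
    ∑ b, dist' p (fun ω => ((A ω, B ω), C ω)) ((a, b), c)
      = dist' p (fun ω => (A ω, C ω)) (a, c) := by
  unfold dist'
  rw [Finset.sum_comm]
  refine Finset.sum_congr rfl fun ω _ => ?_
  simp [Prod.ext_iff, ite_and, Finset.sum_ite_eq, Finset.sum_ite_eq']

lemma marg3_fst [Fintype α] (A : Ω → α) (B : Ω → β) (C : Ω → γ) (b : β) (c : γ) :
    ∑ a, dist' p (fun ω => ((A ω, B ω), C ω)) ((a, b), c)
      = dist' p (fun ω => (B ω, C ω)) (b, c) := by
  have h : ∀ a, dist' p (fun ω => ((A ω, B ω), C ω)) ((a, b), c)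
      = dist' p (fun ω => ((B ω, A ω), C ω)) ((b, a), c) := by
    intro a; unfold dist'
    refine Finset.sum_congr rfl fun ω _ => ?_
    have h' : (((A ω, B ω), C ω) = ((a, b), c)) ↔ (((B ω, A ω), C ω) = ((b, a), c)) := by
      simp only [Prod.ext_iff]; tauto
    split_ifs with hc hd hd <;>
    first
      | rfl
      | exact absurd (h'.mp hc) hd
      | exact absurd (h'.mpr hd) hc
  simp_rw [h]
  exact marg3_snd p B A C b c


lemma sum_comm3 {α β γ : Type*} [Fintype α] [Fintype β] [Fintype γ] (f : α → β → γ → ℝ) :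
    ∑ x, ∑ y, ∑ z, f x y z = ∑ z, ∑ x, ∑ y, f x y z :=
  calc ∑ x, ∑ y, ∑ z, f x y z = ∑ x, ∑ z, ∑ y, f x y z :=
        Finset.sum_congr rfl fun x _ => Finset.sum_comm
    _ = ∑ z, ∑ x, ∑ y, f x y z := Finset.sum_comm

lemma ent_log2 {δ : Type*} [Fintype δ] (W : Ω → δ) :
    ent p W * Real.log 2 = -∑ d, dist' p W d * Real.log (dist' p W d) := by
  have hl2 : Real.log 2 ≠ 0 := ne_of_gt (Real.log_pos (by norm_num))
  unfold ent
  rw [neg_mul, Finset.sum_mul, neg_inj]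
  refine Finset.sum_congr rfl fun d _ => ?_
  rw [Real.logb, mul_assoc, div_mul_cancel₀ _ hl2]

lemma dist'_fiber_pair [Fintype α] (X : Ω → α) (g : α → β) (x : α) (z : β) :
    dist' p (fun ω => (X ω, g (X ω))) (x, z) = if g x = z then dist' p X x else 0 :=
  (dist'_comp p X (fun a => (a, g a)) (x, z)).trans (by
    simp only [Prod.mk.injEq, ite_and]
    rw [Finset.sum_ite_eq' Finset.univ x (fun a => if g a = z then dist' p X a else 0)]
    simp)

lemma dist'_fiber_triple [Fintype α] [Fintype β] (X : Ω → α) (Y : Ω → β) (g : α → γ)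
    (x : α) (y : β) (z : γ) :
    dist' p (fun ω => ((X ω, Y ω), g (X ω))) ((x, y), z)
      = if g x = z then dist' p (fun ω => (X ω, Y ω)) (x, y) else 0 :=
  (dist'_comp p (fun ω => (X ω, Y ω)) (fun q => (q, g q.1)) ((x, y), z)).trans (by
    rw [Fintype.sum_prod_type]
    simp only [Prod.mk.injEq, ite_and]
    simp [Finset.sum_ite_eq'])

lemma dist'_fiber_snd [Fintype α] [Fintype β] (X : Ω → α) (Y : Ω → β) (g : α → γ)
    (y : β) (z : γ) :
    dist' p (fun ω => (Y ω, g (X ω))) (y, z)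
      = ∑ x, if g x = z then dist' p (fun ω => (X ω, Y ω)) (x, y) else 0 :=
  (dist'_comp p (fun ω => (X ω, Y ω)) (fun q => (q.2, g q.1)) (y, z)).trans (by
    rw [Fintype.sum_prod_type]
    refine Finset.sum_congr rfl fun a _ => ?_
    simp only [Prod.mk.injEq, ite_and]
    simp [Finset.sum_ite_eq'])

end helperlemmas

section quotpart
variable {𝒳 : Type*} (R : 𝒳 → 𝒳 → Prop)

def gfun : 𝒳 → 𝒳 := fun x => (Quotient.mk (Relation.EqvGen.setoid R) x).out

lemma gfun_eq_iff (x x' : 𝒳) : gfun R x = gfun R x' ↔ Relation.EqvGen R x x' := by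
  constructor
  · intro h
    have h2 : Quotient.mk (Relation.EqvGen.setoid R) x = Quotient.mk (Relation.EqvGen.setoid R) x' :=
      Quotient.out_inj.mp h
    exact Quotient.eq.mp h2
  · intro h
    exact congrArg Quotient.out (Quotient.sound h)

end quotpart

lemma cmi_eq_zero_iff {α β γ : Type*} [Fintype α] [Fintype β] [Fintype γ]
    (p : Ω → ℝ) (hp : IsPMF p) (X : Ω → α) (Y : Ω → β) (Z : Ω → γ)
    (A : α → β → γ → ℝ) (B : α → γ → ℝ) (C : β → γ → ℝ) (D : γ → ℝ)
    (hA : ∀ x y z, A x y z = dist' p (fun ω => ((X ω, Y ω), Z ω)) ((x, y), z))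
    (hB : ∀ x z, B x z = dist' p (fun ω => (X ω, Z ω)) (x, z))
    (hC : ∀ y z, C y z = dist' p (fun ω => (Y ω, Z ω)) (y, z))
    (hD : ∀ z, D z = dist' p Z z) :
    cmi p X Y Z = 0 ↔ ∀ x y z, A x y z * D z = B x z * C y z := by
  obtain ⟨hp0, _⟩ := hp
  have hl2 : (0:ℝ) < Real.log 2 := Real.log_pos (by norm_num)
  -- marginal identities
  have mAB : ∀ x z, ∑ y, A x y z = B x z := by
    intro x z; simp_rw [hA, hB]; exact marg3_snd p X Y Z x z
  have mAC : ∀ y z, ∑ x, A x y z = C y z := by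
    intro y z; simp_rw [hA, hC]; exact marg3_fst p X Y Z y z
  have mBD : ∀ z, ∑ x, B x z = D z := by
    intro z; simp_rw [hB, hD]; exact marg_fst p X Z z
  have mCD : ∀ z, ∑ y, C y z = D z := by
    intro z; simp_rw [hC, hD]; exact marg_fst p Y Z z
  -- nonnegativity
  have hA0 : ∀ x y z, 0 ≤ A x y z := fun x y z => (hA x y z) ▸ dist'_nonneg p hp0 _ _
  have hB0 : ∀ x z, 0 ≤ B x z := fun x z => (hB x z) ▸ dist'_nonneg p hp0 _ _
  have hC0 : ∀ y z, 0 ≤ C y z := fun y z => (hC y z) ▸ dist'_nonneg p hp0 _ _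
  have hD0 : ∀ z, 0 ≤ D z := fun z => (hD z) ▸ dist'_nonneg p hp0 _ _
  -- domination
  have hAB : ∀ x y z, A x y z ≤ B x z := fun x y z => by
    rw [← mAB x z]
    exact Finset.single_le_sum (f := fun y => A x y z) (fun y _ => hA0 x y z) (Finset.mem_univ y)
  have hAC : ∀ x y z, A x y z ≤ C y z := fun x y z => by
    rw [← mAC y z]
    exact Finset.single_le_sum (f := fun x => A x y z) (fun x _ => hA0 x y z) (Finset.mem_univ x)
  have hBD : ∀ x z, B x z ≤ D z := fun x z => by
    rw [← mBD z]
    exact Finset.single_le_sum (f := fun x => B x z) (fun x _ => hB0 x z) (Finset.mem_univ x)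
  set S := ∑ z, ∑ x, ∑ y, A x y z *
      (Real.log (B x z) + Real.log (C y z) - Real.log (A x y z) - Real.log (D z)) with hSdef
  -- the rearrangement
  have e1 : ent p (fun ω => (X ω, Z ω)) * Real.log 2
      = -∑ z, ∑ x, ∑ y, A x y z * Real.log (B x z) := by
    rw [ent_log2, Fintype.sum_prod_type, neg_inj, Finset.sum_comm]
    refine Finset.sum_congr rfl fun z _ => Finset.sum_congr rfl fun x _ => ?_
    rw [← hB, ← mAB, Finset.sum_mul]
  have e2 : ent p (fun ω => (Y ω, Z ω)) * Real.log 2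
      = -∑ z, ∑ x, ∑ y, A x y z * Real.log (C y z) := by
    rw [ent_log2, Fintype.sum_prod_type, neg_inj, Finset.sum_comm]
    refine Finset.sum_congr rfl fun z _ => ?_
    rw [Finset.sum_comm]
    refine Finset.sum_congr rfl fun y _ => ?_
    rw [← hC, ← mAC, Finset.sum_mul]
  have e3 : ent p (fun ω => ((X ω, Y ω), Z ω)) * Real.log 2
      = -∑ z, ∑ x, ∑ y, A x y z * Real.log (A x y z) := by
    rw [ent_log2, Fintype.sum_prod_type, neg_inj]
    rw [show (∑ q : α × β, ∑ z, dist' p (fun ω => ((X ω, Y ω), Z ω)) (q, z) *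
        Real.log (dist' p (fun ω => ((X ω, Y ω), Z ω)) (q, z)))
      = ∑ x, ∑ y, ∑ z, A x y z * Real.log (A x y z) from ?_]
    · exact sum_comm3 _
    · rw [Fintype.sum_prod_type]
      exact Finset.sum_congr rfl fun x _ => Finset.sum_congr rfl fun y _ =>
        Finset.sum_congr rfl fun z _ => by rw [hA]
  have e4 : ent p Z * Real.log 2 = -∑ z, ∑ x, ∑ y, A x y z * Real.log (D z) := by
    rw [ent_log2, neg_inj]
    refine Finset.sum_congr rfl fun z _ => ?_
    rw [← hD, ← mBD, Finset.sum_mul]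
    refine Finset.sum_congr rfl fun x _ => ?_
    rw [← mAB, Finset.sum_mul]
  have hSsplit : S = (∑ z, ∑ x, ∑ y, A x y z * Real.log (B x z))
      + (∑ z, ∑ x, ∑ y, A x y z * Real.log (C y z))
      - (∑ z, ∑ x, ∑ y, A x y z * Real.log (A x y z))
      - (∑ z, ∑ x, ∑ y, A x y z * Real.log (D z)) := by
    rw [hSdef]
    simp only [mul_add, mul_sub, Finset.sum_add_distrib, Finset.sum_sub_distrib]
  have key : cmi p X Y Z * Real.log 2 = -S := by
    unfold cmi
    rw [sub_mul, sub_mul, add_mul, e1, e2, e3, e4, hSsplit]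
    ring
  -- pointwise terms and bounds
  set t : γ → α → β → ℝ := fun z x y => A x y z *
      (Real.log (B x z) + Real.log (C y z) - Real.log (A x y z) - Real.log (D z)) with htdef
  set E : γ → α → β → ℝ := fun z x y =>
      (if D z = 0 then 0 else B x z * C y z / D z) - A x y z with hEdef
  have hle : ∀ z x y, t z x y ≤ E z x y := by
    intro z x y
    by_cases hAz : A x y z = 0
    · rw [htdef, hEdef]
      simp only [hAz, zero_mul, sub_zero]
      split_ifs with h
      · exact le_refl 0
      · exact div_nonneg (mul_nonneg (hB0 x z) (hC0 y z)) (hD0 z)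
    · have hApos : 0 < A x y z := lt_of_le_of_ne (hA0 x y z) (Ne.symm hAz)
      have hBpos : 0 < B x z := lt_of_lt_of_le hApos (hAB x y z)
      have hCpos : 0 < C y z := lt_of_lt_of_le hApos (hAC x y z)
      have hDpos : 0 < D z := lt_of_lt_of_le hBpos (hBD x z)
      have hlog : Real.log (B x z) + Real.log (C y z) - Real.log (A x y z) - Real.log (D z)
          = Real.log (B x z * C y z / (A x y z * D z)) := by
        rw [Real.log_div (by positivity) (by positivity), Real.log_mul hBpos.ne' hCpos.ne',
          Real.log_mul hApos.ne' hDpos.ne']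
        ring
      have hineq := Real.log_le_sub_one_of_pos
        (show 0 < B x z * C y z / (A x y z * D z) by positivity)
      have h2 : A x y z * Real.log (B x z * C y z / (A x y z * D z))
          ≤ A x y z * (B x z * C y z / (A x y z * D z) - 1) :=
        mul_le_mul_of_nonneg_left hineq hApos.le
      have h3 : A x y z * (B x z * C y z / (A x y z * D z) - 1)
          = B x z * C y z / D z - A x y z := by
        field_simp
      rw [htdef, hEdef]
      simp only [if_neg hDpos.ne']
      calc A x y z * (Real.log (B x z) + Real.log (C y z) - Real.log (A x y z) - Real.log (D z))
          = A x y z * Real.log (B x z * C y z / (A x y z * D z)) := by rw [hlog]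
        _ ≤ A x y z * (B x z * C y z / (A x y z * D z) - 1) := h2
        _ = B x z * C y z / D z - A x y z := h3
  have hEsum : ∑ z, ∑ x, ∑ y, E z x y = 0 := by
    refine Finset.sum_eq_zero fun z _ => ?_
    have hAsum : ∑ x, ∑ y, A x y z = D z := by
      rw [← mBD z]; exact Finset.sum_congr rfl fun x _ => mAB x z
    by_cases hDz : D z = 0
    · rw [hEdef]
      simp only [if_pos hDz]
      simp only [zero_sub, Finset.sum_neg_distrib]
      rw [hAsum, hDz, neg_zero]
    · rw [hEdef]
      simp only [if_neg hDz]
      simp only [Finset.sum_sub_distrib]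
      rw [hAsum]
      have : ∑ x, ∑ y, B x z * C y z / D z = D z := by
        have hx : ∀ x, ∑ y, B x z * C y z / D z = B x z := by
          intro x
          rw [← Finset.sum_div, ← Finset.mul_sum, mCD z, mul_div_assoc, div_self hDz, mul_one]
        rw [Finset.sum_congr rfl fun x _ => hx x, mBD z]
      rw [this, sub_self]
  constructor
  · -- forward: cmi = 0 → factorization
    intro h
    have hS0 : S = 0 := by
      have hk : -S = 0 := by rw [← key, h, zero_mul]
      linarith
    -- pointwise equality t = E
    have hts : ∑ z, ∑ x, ∑ y, t z x y = S := by rw [hSdef]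
    have hdiff : ∑ z, ∑ x, ∑ y, (E z x y - t z x y) = 0 := by
      simp only [Finset.sum_sub_distrib]
      rw [hEsum, hts, hS0, sub_zero]
    have hpt : ∀ z x y, t z x y = E z x y := by
      have l1 := (Finset.sum_eq_zero_iff_of_nonneg
        (fun z _ => Finset.sum_nonneg fun x _ => Finset.sum_nonneg fun y _ =>
          sub_nonneg.mpr (hle z x y))).mp hdiff
      intro z x y
      have l2 := (Finset.sum_eq_zero_iff_of_nonneg
        (fun x _ => Finset.sum_nonneg fun y _ => sub_nonneg.mpr (hle z x y))).mp
        (l1 z (Finset.mem_univ z))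
      have l3 := (Finset.sum_eq_zero_iff_of_nonneg
        (fun y _ => sub_nonneg.mpr (hle z x y))).mp (l2 x (Finset.mem_univ x))
      have := l3 y (Finset.mem_univ y)
      linarith [this]
    intro x y z
    by_cases hDz : D z = 0
    · have hAz : A x y z = 0 :=
        le_antisymm (le_trans (hAB x y z) (le_trans (hBD x z) (le_of_eq hDz))) (hA0 x y z)
      have hBz : B x z = 0 := le_antisymm (le_trans (hBD x z) (le_of_eq hDz)) (hB0 x z)
      rw [hAz, hBz, zero_mul, zero_mul]
    · by_cases hAz : A x y z = 0
      · have ht0 : t z x y = 0 := by rw [htdef]; simp [hAz]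
        have hE0 : E z x y = 0 := by rw [← hpt z x y, ht0]
        rw [hEdef] at hE0
        simp only [if_neg hDz, hAz, sub_zero] at hE0
        have hBC : B x z * C y z = 0 := by
          field_simp at hE0
          simpa using hE0
        rw [hAz, zero_mul, hBC]
      · have hApos : 0 < A x y z := lt_of_le_of_ne (hA0 x y z) (Ne.symm hAz)
        have hBpos : 0 < B x z := lt_of_lt_of_le hApos (hAB x y z)
        have hCpos : 0 < C y z := lt_of_lt_of_le hApos (hAC x y z)
        have hDpos : 0 < D z := lt_of_le_of_ne (hD0 z) (Ne.symm hDz)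
        have hlog : Real.log (B x z) + Real.log (C y z) - Real.log (A x y z) - Real.log (D z)
            = Real.log (B x z * C y z / (A x y z * D z)) := by
          rw [Real.log_div (by positivity) (by positivity), Real.log_mul hBpos.ne' hCpos.ne',
            Real.log_mul hApos.ne' hDpos.ne']
          ring
        have heq := hpt z x y
        rw [htdef, hEdef] at heq
        simp only [if_neg hDz] at heq
        rw [hlog] at heq
        set r := B x z * C y z / (A x y z * D z) with hrdef
        have hrpos : 0 < r := by rw [hrdef]; positivity
        have hr1 : r = 1 := by
          by_contra hr
          have hstrict := Real.log_lt_sub_one_of_pos hrpos hr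
          have h4 : A x y z * Real.log r < A x y z * (r - 1) :=
            (mul_lt_mul_iff_right₀ hApos).mpr hstrict
          have h5 : A x y z * (r - 1) = B x z * C y z / D z - A x y z := by
            rw [hrdef]; field_simp
          linarith
        have : B x z * C y z = A x y z * D z := by
          have := (div_eq_one_iff_eq (by positivity : A x y z * D z ≠ 0)).mp hr1
          linarith [this]
        linarith [this]
  · -- backward: factorization → cmi = 0
    intro h
    have hS0 : S = 0 := by
      rw [hSdef]
      refine Finset.sum_eq_zero fun z _ => Finset.sum_eq_zero fun x _ =>
        Finset.sum_eq_zero fun y _ => ?_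
      by_cases hAz : A x y z = 0
      · rw [hAz, zero_mul]
      · have hApos : 0 < A x y z := lt_of_le_of_ne (hA0 x y z) (Ne.symm hAz)
        have hBpos : 0 < B x z := lt_of_lt_of_le hApos (hAB x y z)
        have hCpos : 0 < C y z := lt_of_lt_of_le hApos (hAC x y z)
        have hDpos : 0 < D z := lt_of_lt_of_le hBpos (hBD x z)
        have hlog : Real.log (A x y z * D z) = Real.log (B x z * C y z) := by rw [h x y z]
        rw [Real.log_mul hApos.ne' hDpos.ne', Real.log_mul hBpos.ne' hCpos.ne'] at hlog
        have : Real.log (B x z) + Real.log (C y z) - Real.log (A x y z) - Real.log (D z) = 0 := by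
          linarith
        rw [this, mul_zero]
    have : cmi p X Y Z * Real.log 2 = 0 := by rw [key, hS0, neg_zero]
    exact (mul_eq_zero.mp this).resolve_right hl2.ne'


/-- Double Markov: if `U -∘- X -∘- Y` and `X -∘- U -∘- Y`, then there are functions
`f` of `U` and `g` of `X` with `P(f(U) = g(X)) = 1` and `X -∘- g(X) -∘- Y`. -/
theorem stmt2 {Ω 𝒰 𝒳 𝒴 : Type*} [Fintype Ω] [Fintype 𝒰] [Fintype 𝒳] [Fintype 𝒴]
    (p : Ω → ℝ) (hp : IsPMF p) (U : Ω → 𝒰) (X : Ω → 𝒳) (Y : Ω → 𝒴)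
    (h1 : cmi p U Y X = 0) (h2 : cmi p X Y U = 0) :
    ∃ (f : 𝒰 → 𝒳) (g : 𝒳 → 𝒳),
      (∑ ω, if f (U ω) = g (X ω) then p ω else 0) = 1 ∧
      cmi p X Y (fun ω => g (X ω)) = 0 := by
  classical
  obtain ⟨hp0, hp1⟩ := hp
  have fact1 : ∀ u y x,
      dist' p (fun ω => ((U ω, Y ω), X ω)) ((u, y), x) * dist' p X x
        = dist' p (fun ω => (U ω, X ω)) (u, x) * dist' p (fun ω => (Y ω, X ω)) (y, x) :=
    (cmi_eq_zero_iff p ⟨hp0, hp1⟩ U Y X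
      (fun u y x => dist' p (fun ω => ((U ω, Y ω), X ω)) ((u, y), x))
      (fun u x => dist' p (fun ω => (U ω, X ω)) (u, x))
      (fun y x => dist' p (fun ω => (Y ω, X ω)) (y, x))
      (fun x => dist' p X x)
      (fun _ _ _ => rfl) (fun _ _ => rfl) (fun _ _ => rfl) (fun _ => rfl)).mp h1
  have fact2 : ∀ x y u,
      dist' p (fun ω => ((X ω, Y ω), U ω)) ((x, y), u) * dist' p U u
        = dist' p (fun ω => (X ω, U ω)) (x, u) * dist' p (fun ω => (Y ω, U ω)) (y, u) :=
    (cmi_eq_zero_iff p ⟨hp0, hp1⟩ X Y U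
      (fun x y u => dist' p (fun ω => ((X ω, Y ω), U ω)) ((x, y), u))
      (fun x u => dist' p (fun ω => (X ω, U ω)) (x, u))
      (fun y u => dist' p (fun ω => (Y ω, U ω)) (y, u))
      (fun u => dist' p U u)
      (fun _ _ _ => rfl) (fun _ _ => rfl) (fun _ _ => rfl) (fun _ => rfl)).mp h2
  have step : ∀ u x, dist' p (fun ω => (U ω, X ω)) (u, x) ≠ 0 → ∀ y,
      dist' p (fun ω => (X ω, Y ω)) (x, y) * dist' p U u
        = dist' p (fun ω => (U ω, Y ω)) (u, y) * dist' p X x := by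
    intro u x hux y
    have f1 := fact1 u y x
    have f2 := fact2 x y u
    rw [dist'_reorder p X Y U x y u, dist'_swap p X U x u, dist'_swap p Y U y u] at f2
    rw [dist'_swap p Y X y x] at f1
    refine mul_left_cancel₀ hux ?_
    linear_combination (dist' p X x) * f2 - (dist' p U u) * f1
  set R : 𝒳 → 𝒳 → Prop := fun x x' => ∃ u,
    dist' p (fun ω => (U ω, X ω)) (u, x) ≠ 0 ∧
    dist' p (fun ω => (U ω, X ω)) (u, x') ≠ 0 with hR
  have hdX : ∀ u x, dist' p (fun ω => (U ω, X ω)) (u, x) ≠ 0 → dist' p X x ≠ 0 := by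
    intro u x h hc
    exact h (le_antisymm (hc ▸ dist'_pair_le_right p hp0 U X u x) (dist'_nonneg p hp0 _ _))
  have hdU : ∀ u x, dist' p (fun ω => (U ω, X ω)) (u, x) ≠ 0 → dist' p U u ≠ 0 := by
    intro u x h hc
    exact h (le_antisymm (hc ▸ dist'_pair_le_left p hp0 U X u x) (dist'_nonneg p hp0 _ _))
  have keyQ : ∀ x x', Relation.EqvGen R x x' → (x = x' ∨ (dist' p X x ≠ 0 ∧ dist' p X x' ≠ 0 ∧
      ∀ y, dist' p (fun ω => (X ω, Y ω)) (x, y) * dist' p X x'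
          = dist' p (fun ω => (X ω, Y ω)) (x', y) * dist' p X x)) := by
    intro x x' h
    induction h with
    | rel a b hab =>
      obtain ⟨u, h1u, h2u⟩ := hab
      right
      refine ⟨hdX u a h1u, hdX u b h2u, fun y => ?_⟩
      have s1 := step u a h1u y
      have s2 := step u b h2u y
      refine mul_right_cancel₀ (hdU u a h1u) ?_
      linear_combination (dist' p X b) * s1 - (dist' p X a) * s2
    | refl a => exact Or.inl rfl
    | symm a b _ ih =>
      rcases ih with rfl | ⟨ha, hb, hab⟩
      · exact Or.inl rfl
      · exact Or.inr ⟨hb, ha, fun y => (hab y).symm⟩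
    | trans a b c _ _ ih1 ih2 =>
      rcases ih1 with rfl | ⟨ha, hb, hab⟩
      · exact ih2
      rcases ih2 with rfl | ⟨hb', hc, hbc⟩
      · exact Or.inr ⟨ha, hb, hab⟩
      refine Or.inr ⟨ha, hc, fun y => ?_⟩
      refine mul_right_cancel₀ hb ?_
      linear_combination (dist' p X c) * (hab y) + (dist' p X a) * (hbc y)
  have hne : Nonempty Ω := by
    by_contra h
    rw [not_nonempty_iff] at h
    rw [Finset.univ_eq_empty, Finset.sum_empty] at hp1
    exact one_ne_zero hp1.symm
  obtain ⟨ω₀⟩ := hne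
  refine ⟨fun u => if h : ∃ x, dist' p (fun ω' => (U ω', X ω')) (u, x) ≠ 0
      then gfun R h.choose else gfun R (X ω₀), gfun R, ?_, ?_⟩
  · -- P(f(U) = g(X)) = 1
    rw [← hp1]
    refine Finset.sum_congr rfl fun ω _ => ?_
    by_cases hω : p ω = 0
    · split_ifs <;> simp [hω]
    · have hle : p ω ≤ dist' p (fun ω' => (U ω', X ω')) (U ω, X ω) :=
        single_le_dist' p hp0 _ ω
      have hUX : dist' p (fun ω' => (U ω', X ω')) (U ω, X ω) ≠ 0 := by
        intro hc
        exact hω (le_antisymm (hc ▸ hle) (hp0 ω))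
      have hex : ∃ x, dist' p (fun ω' => (U ω', X ω')) (U ω, x) ≠ 0 := ⟨X ω, hUX⟩
      have hfg : (if h : ∃ x, dist' p (fun ω' => (U ω', X ω')) (U ω, x) ≠ 0
          then gfun R h.choose else gfun R (X ω₀)) = gfun R (X ω) := by
        rw [dif_pos hex]
        exact (gfun_eq_iff R _ _).mpr
          (Relation.EqvGen.rel _ _ ⟨U ω, hex.choose_spec, hUX⟩)
      rw [if_pos hfg]
  · -- Markov chain X -∘- g(X) -∘- Y
    refine (cmi_eq_zero_iff p ⟨hp0, hp1⟩ X Y (fun ω => gfun R (X ω))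
      (fun x y z => if gfun R x = z then dist' p (fun ω => (X ω, Y ω)) (x, y) else 0)
      (fun x z => if gfun R x = z then dist' p X x else 0)
      (fun y z => ∑ x, if gfun R x = z then dist' p (fun ω => (X ω, Y ω)) (x, y) else 0)
      (fun z => ∑ x, if gfun R x = z then dist' p X x else 0)
      (fun x y z => (dist'_fiber_triple p X Y (gfun R) x y z).symm)
      (fun x z => (dist'_fiber_pair p X (gfun R) x z).symm)
      (fun y z => (dist'_fiber_snd p X Y (gfun R) y z).symm)
      (fun z => (dist'_comp p X (gfun R) z).symm)).mpr ?_
    intro x y z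
    by_cases hgx : gfun R x = z
    · simp only [if_pos hgx, Finset.mul_sum]
      refine Finset.sum_congr rfl fun x' _ => ?_
      by_cases hgx' : gfun R x' = z
      · simp only [if_pos hgx']
        have heqv : Relation.EqvGen R x x' := (gfun_eq_iff R x x').mp (hgx.trans hgx'.symm)
        rcases keyQ x x' heqv with rfl | ⟨_, _, hq⟩
        · ring
        · exact (hq y).trans (mul_comm _ _)
      · simp only [if_neg hgx', mul_zero]
    · simp only [if_neg hgx, zero_mul]
end
end

section
/- Let U₁,...,U_r be finite random variables satisfying the interactive conditions: U_{2i+1} → (X, U^{2i}) → Y and U_{2i} → (Y, U^{2i-1}) → X for all applicable i, and X → U^r → Y. Then I(X, Y ∧ U^r) − I(X ∧ Y) = Σ_{i odd} I(X ∧ U_i | Y, U^{i−1}) + Σ_{i even} I(Y ∧ U_i | X, U^{i−1}). -/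
open scoped Classical
open Finset Real

noncomputable section

variable {Ω : Type*} [Fintype Ω]

/-- The prefix `U^i = (U_1, ..., U_i)` of an interactive sequence. -/
def pre {𝒰 : Type*} {r : ℕ} (U : Fin r → Ω → 𝒰) (i : ℕ) (h : i ≤ r) :
    Ω → (Fin i → 𝒰) :=
  fun ω k => U (Fin.castLE h k) ω

/-- Condition (P1): interactive Markov conditions.  Index `j : Fin r` corresponds to the
`(j+1)`-st message; messages with odd 1-based index (`Even j.val`) are sent by terminal 𝒳. -/
def P1cond {𝒳 𝒴 𝒰 : Type*} [Fintype 𝒳] [Fintype 𝒴] [Fintype 𝒰] {r : ℕ}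
    (p : Ω → ℝ) (X : Ω → 𝒳) (Y : Ω → 𝒴) (U : Fin r → Ω → 𝒰) : Prop :=
  ∀ j : Fin r,
    (Even j.val → cmi p (U j) Y (fun ω => (X ω, pre U j.val j.isLt.le ω)) = 0) ∧
    (¬ Even j.val → cmi p (U j) X (fun ω => (Y ω, pre U j.val j.isLt.le ω)) = 0)

/-- Condition (P2): `X -∘- U^r -∘- Y`. -/
def P2cond {𝒳 𝒴 𝒰 : Type*} [Fintype 𝒳] [Fintype 𝒴] [Fintype 𝒰] {r : ℕ}
    (p : Ω → ℝ) (X : Ω → 𝒳) (Y : Ω → 𝒴) (U : Fin r → Ω → 𝒰) : Prop :=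
  cmi p X Y (pre U r le_rfl) = 0

section helpers


lemma dist'_comp_s11 {α β : Type*} (p : Ω → ℝ) (X : Ω → α) (e : α → β)
    (he : Function.Injective e) (x : α) :
    dist' p (fun ω => e (X ω)) (e x) = dist' p X x := by
  unfold dist'
  apply Finset.sum_congr rfl
  intro ω _
  simp [he.eq_iff]

lemma ent_comp_inj {α β : Type*} [Fintype α] [Fintype β] (p : Ω → ℝ) (X : Ω → α)
    (e : α → β) (he : Function.Injective e) :
    ent p (fun ω => e (X ω)) = ent p X := by
  have hz : ∀ y ∉ Finset.univ.image e, dist' p (fun ω => e (X ω)) y = 0 := by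
    intro y hy
    unfold dist'
    apply Finset.sum_eq_zero
    intro ω _
    rw [if_neg]
    intro h
    exact hy (Finset.mem_image.2 ⟨X ω, Finset.mem_univ _, h⟩)
  unfold ent
  congr 1
  calc ∑ y, dist' p (fun ω => e (X ω)) y * Real.logb 2 (dist' p (fun ω => e (X ω)) y)
      = ∑ y ∈ Finset.univ.image e,
          dist' p (fun ω => e (X ω)) y * Real.logb 2 (dist' p (fun ω => e (X ω)) y) := by
        refine (Finset.sum_subset (Finset.subset_univ _) ?_).symm
        intro y _ hy
        rw [hz y hy, zero_mul]
    _ = ∑ x, dist' p (fun ω => e (X ω)) (e x) * Real.logb 2 (dist' p (fun ω => e (X ω)) (e x)) :=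
        Finset.sum_image (by intro a _ b _ h; exact he h)
    _ = ∑ x, dist' p X x * Real.logb 2 (dist' p X x) := by
        apply Finset.sum_congr rfl
        intro x _
        rw [dist'_comp_s11 p X e he x]

lemma ent_congr {α β : Type*} [Fintype α] [Fintype β] (p : Ω → ℝ) (X : Ω → α) (Y : Ω → β)
    (e : α → β) (he : Function.Injective e) (h : ∀ ω, Y ω = e (X ω)) :
    ent p Y = ent p X := by
  have hYX : Y = fun ω => e (X ω) := funext h
  rw [hYX, ent_comp_inj p X e he]

section algebra
variable {α β γ δ : Type*} [Fintype α] [Fintype β] [Fintype γ] [Fintype δ]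
variable (p : Ω → ℝ) (A : Ω → α) (B : Ω → β) (C : Ω → γ) (D : Ω → δ)

/-- chain rule : I(A ∧ B,C) = I(A ∧ C) + I(A ∧ B | C) -/
lemma mi_pair_right :
    mi p A (fun ω => (B ω, C ω)) = mi p A C + cmi p A B C := by
  have h1 : ent p (fun ω => (A ω, (B ω, C ω))) = ent p (fun ω => ((A ω, B ω), C ω)) :=
    ent_congr p _ _ (fun x => (x.1.1, (x.1.2, x.2)))
      (by rintro ⟨⟨a, b⟩, c⟩ ⟨⟨a', b'⟩, c'⟩ h; simp only [Prod.mk.injEq] at h ⊢; tauto)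
      (fun ω => rfl)
  unfold mi cmi
  rw [h1]; ring

lemma cmi_comm : cmi p A B C = cmi p B A C := by
  have h1 : ent p (fun ω => ((A ω, B ω), C ω)) = ent p (fun ω => ((B ω, A ω), C ω)) :=
    ent_congr p _ _ (fun x => ((x.1.2, x.1.1), x.2))
      (by rintro ⟨⟨a, b⟩, c⟩ ⟨⟨a', b'⟩, c'⟩ h; simp only [Prod.mk.injEq] at h ⊢; tauto)
      (fun ω => rfl)
  unfold cmi
  rw [h1]; ring

/-- chain rule : I(A ∧ B,C | D) = I(A ∧ B | D) + I(A ∧ C | B,D) -/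
lemma cmi_pair_right :
    cmi p A (fun ω => (B ω, C ω)) D
      = cmi p A B D + cmi p A C (fun ω => (B ω, D ω)) := by
  have h1 : ent p (fun ω => (A ω, (B ω, D ω))) = ent p (fun ω => ((A ω, B ω), D ω)) :=
    ent_congr p _ _ (fun x => (x.1.1, (x.1.2, x.2)))
      (by rintro ⟨⟨a, b⟩, d⟩ ⟨⟨a', b'⟩, d'⟩ h; simp only [Prod.mk.injEq] at h ⊢; tauto)
      (fun ω => rfl)
  have h2 : ent p (fun ω => (C ω, (B ω, D ω))) = ent p (fun ω => ((B ω, C ω), D ω)) :=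
    ent_congr p _ _ (fun x => (x.1.2, (x.1.1, x.2)))
      (by rintro ⟨⟨b, c⟩, d⟩ ⟨⟨b', c'⟩, d'⟩ h; simp only [Prod.mk.injEq] at h ⊢; tauto)
      (fun ω => rfl)
  have h3 : ent p (fun ω => ((A ω, C ω), (B ω, D ω)))
      = ent p (fun ω => ((A ω, (B ω, C ω)), D ω)) :=
    ent_congr p _ _ (fun x => ((x.1.1, x.1.2.2), (x.1.2.1, x.2)))
      (by rintro ⟨⟨a, b, c⟩, d⟩ ⟨⟨a', b', c'⟩, d'⟩ h; simp only [Prod.mk.injEq] at h ⊢; tauto)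
      (fun ω => rfl)
  unfold cmi
  rw [h1, h2, h3]; ring

lemma cmi_swap_right :
    cmi p A (fun ω => (B ω, C ω)) D = cmi p A (fun ω => (C ω, B ω)) D := by
  have h1 : ent p (fun ω => ((C ω, B ω), D ω)) = ent p (fun ω => ((B ω, C ω), D ω)) :=
    ent_congr p _ _ (fun x => ((x.1.2, x.1.1), x.2))
      (by rintro ⟨⟨b, c⟩, d⟩ ⟨⟨b', c'⟩, d'⟩ h; simp only [Prod.mk.injEq] at h ⊢; tauto)
      (fun ω => rfl)
  have h2 : ent p (fun ω => ((A ω, (C ω, B ω)), D ω))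
      = ent p (fun ω => ((A ω, (B ω, C ω)), D ω)) :=
    ent_congr p _ _ (fun x => ((x.1.1, (x.1.2.2, x.1.2.1)), x.2))
      (by rintro ⟨⟨a, b, c⟩, d⟩ ⟨⟨a', b', c'⟩, d'⟩ h; simp only [Prod.mk.injEq] at h ⊢; tauto)
      (fun ω => rfl)
  unfold cmi
  rw [h1, h2]

variable {γ' : Type*} [Fintype γ'] (W : Ω → γ') (e : γ' → γ)

lemma mi_congr_right (he : Function.Injective e) (h : ∀ ω, C ω = e (W ω)) :
    mi p A C = mi p A W := by
  have h1 : ent p C = ent p W := ent_congr p W C e he h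
  have h2 : ent p (fun ω => (A ω, C ω)) = ent p (fun ω => (A ω, W ω)) :=
    ent_congr p _ _ (fun x => (x.1, e x.2))
      (by rintro ⟨a, w⟩ ⟨a', w'⟩ hh; simp only [Prod.mk.injEq] at hh ⊢
          exact ⟨hh.1, he hh.2⟩)
      (fun ω => by rw [h ω])
  unfold mi
  rw [h1, h2]

lemma cmi_congr_right (he : Function.Injective e) (h : ∀ ω, C ω = e (W ω)) :
    cmi p A B C = cmi p A B W := by
  have h0 : ent p C = ent p W := ent_congr p W C e he h
  have hinj : Function.Injective (fun x : α × β × γ' => x) := fun a b hh => hh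
  have hA : ent p (fun ω => (A ω, C ω)) = ent p (fun ω => (A ω, W ω)) :=
    ent_congr p _ _ (fun x => (x.1, e x.2))
      (by rintro ⟨a, w⟩ ⟨a', w'⟩ hh; simp only [Prod.mk.injEq] at hh ⊢
          exact ⟨hh.1, he hh.2⟩)
      (fun ω => by rw [h ω])
  have hB : ent p (fun ω => (B ω, C ω)) = ent p (fun ω => (B ω, W ω)) :=
    ent_congr p _ _ (fun x => (x.1, e x.2))
      (by rintro ⟨a, w⟩ ⟨a', w'⟩ hh; simp only [Prod.mk.injEq] at hh ⊢
          exact ⟨hh.1, he hh.2⟩)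
      (fun ω => by rw [h ω])
  have hAB : ent p (fun ω => ((A ω, B ω), C ω)) = ent p (fun ω => ((A ω, B ω), W ω)) :=
    ent_congr p _ _ (fun x => (x.1, e x.2))
      (by rintro ⟨a, w⟩ ⟨a', w'⟩ hh; simp only [Prod.mk.injEq] at hh ⊢
          exact ⟨hh.1, he hh.2⟩)
      (fun ω => by rw [h ω])
  unfold cmi
  rw [h0, hA, hB, hAB]

end algebra

section unique
variable {α β γ : Type*} [Fintype α] [Fintype β] [Fintype γ] [Unique γ]
variable (p : Ω → ℝ)

lemma ent_unique (hp : IsPMF p) (Z : Ω → γ) : ent p Z = 0 := by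
  have h : dist' p Z default = 1 := by
    unfold dist'
    rw [← hp.2]
    apply Finset.sum_congr rfl
    intro ω _
    rw [if_pos (Unique.eq_default _)]
  unfold ent
  rw [Finset.univ_unique, Finset.sum_singleton, h, Real.logb_one, mul_zero, neg_zero]

lemma ent_pair_unique (A : Ω → α) (Z : Ω → γ) :
    ent p (fun ω => (A ω, Z ω)) = ent p A :=
  ent_congr p A _ (fun a => (a, default))
    (fun a b h => congrArg Prod.fst h)
    (fun ω => by rw [Unique.eq_default (Z ω)])

lemma mi_unique_right (hp : IsPMF p) (A : Ω → α) (Z : Ω → γ) : mi p A Z = 0 := by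
  unfold mi
  rw [ent_unique p hp Z, ent_pair_unique p A Z]; ring

lemma cmi_unique_cond (hp : IsPMF p) (A : Ω → α) (B : Ω → β) (Z : Ω → γ) :
    cmi p A B Z = mi p A B := by
  unfold cmi mi
  rw [ent_unique p hp Z, ent_pair_unique p A Z, ent_pair_unique p B Z,
    ent_pair_unique p (fun ω => (A ω, B ω)) Z]; ring

end unique

set_option linter.unusedSectionVars false

lemma pre_castSucc {𝒰 : Type*} {r : ℕ} (U : Fin (r + 1) → Ω → 𝒰) (j : ℕ) (h : j ≤ r) :
    pre (fun i : Fin r => U i.castSucc) j h = pre U j (h.trans (Nat.le_succ r)) := by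
  funext ω k
  show U ((Fin.castLE h k).castSucc) ω = U (Fin.castLE (h.trans (Nat.le_succ r)) k) ω
  congr 1

lemma pre_snoc {𝒰 : Type*} {r : ℕ} (U : Fin (r + 1) → Ω → 𝒰) (ω : Ω) :
    pre U (r + 1) le_rfl ω
      = Fin.snoc (pre U r (Nat.le_succ r) ω) (U (Fin.last r) ω) := by
  funext k
  refine Fin.lastCases ?_ ?_ k
  · rw [Fin.snoc_last]
    show U (Fin.castLE le_rfl (Fin.last r)) ω = U (Fin.last r) ω
    congr 1
  · intro i
    rw [Fin.snoc_castSucc]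
    show U (Fin.castLE le_rfl i.castSucc) ω = U (Fin.castLE (Nat.le_succ r) i) ω
    congr 1

def snocE {𝒰 : Type*} {r : ℕ} (x : 𝒰 × (Fin r → 𝒰)) : Fin (r + 1) → 𝒰 :=
  Fin.snoc x.2 x.1

lemma snoc_inj {𝒰 : Type*} {r : ℕ} :
    Function.Injective (snocE : 𝒰 × (Fin r → 𝒰) → Fin (r + 1) → 𝒰) := by
  unfold snocE
  rintro ⟨u, f⟩ ⟨v, g⟩ h
  simp only at h
  have h1 : u = v := by simpa using congrFun h (Fin.last r)
  have h2 : f = g := funext fun i => by simpa using congrFun h (Fin.castSucc i)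
  simp [h1, h2]

theorem stmt11_aux {𝒳 𝒴 𝒰 : Type*} [Fintype 𝒳] [Fintype 𝒴] [Fintype 𝒰] :
    ∀ (r : ℕ) (U : Fin r → Ω → 𝒰) (p : Ω → ℝ), IsPMF p → ∀ (X : Ω → 𝒳) (Y : Ω → 𝒴),
    P1cond p X Y U →
    mi p (fun ω => (X ω, Y ω)) (pre U r le_rfl) + cmi p X Y (pre U r le_rfl)
      = (∑ j : Fin r, if Even j.val
          then cmi p X (U j) (fun ω => (Y ω, pre U j.val j.isLt.le ω))
          else cmi p Y (U j) (fun ω => (X ω, pre U j.val j.isLt.le ω))) + mi p X Y := by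
  intro r
  induction r with
  | zero =>
    intro U p hp X Y _
    haveI : Unique (Fin 0 → 𝒰) := ⟨⟨fun i => i.elim0⟩, fun f => funext fun i => i.elim0⟩
    rw [mi_unique_right p hp (fun ω => (X ω, Y ω)) (pre U 0 le_rfl),
      cmi_unique_cond p hp X Y (pre U 0 le_rfl)]
    simp
  | succ r ih =>
    intro U p hp X Y h1
    have h1' : P1cond p X Y (fun i : Fin r => U i.castSucc) := fun j => h1 j.castSucc
    have ihh : mi p (fun ω => (X ω, Y ω)) (pre (fun i : Fin r => U i.castSucc) r le_rfl)
        + cmi p X Y (pre (fun i : Fin r => U i.castSucc) r le_rfl)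
        = (∑ j : Fin r, if Even j.val
            then cmi p X ((fun i : Fin r => U i.castSucc) j)
              (fun ω => (Y ω, pre (fun i : Fin r => U i.castSucc) j.val j.isLt.le ω))
            else cmi p Y ((fun i : Fin r => U i.castSucc) j)
              (fun ω => (X ω, pre (fun i : Fin r => U i.castSucc) j.val j.isLt.le ω)))
          + mi p X Y := ih (fun i : Fin r => U i.castSucc) p hp X Y h1'
    have hpre : pre (fun i : Fin r => U i.castSucc) r le_rfl = pre U r (Nat.le_succ r) :=
      pre_castSucc U r le_rfl
    rw [hpre] at ihh
    have hsnocfun : ∀ ω, pre U (r + 1) le_rfl ω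
        = snocE ((U (Fin.last r) ω, pre U r (Nat.le_succ r) ω)) := fun ω => pre_snoc U ω
    have hA : mi p (fun ω => (X ω, Y ω)) (pre U (r + 1) le_rfl)
        = mi p (fun ω => (X ω, Y ω))
            (fun ω => (U (Fin.last r) ω, pre U r (Nat.le_succ r) ω)) :=
      mi_congr_right p _ _ _ _ snoc_inj hsnocfun
    have hB : cmi p X Y (pre U (r + 1) le_rfl)
        = cmi p X Y (fun ω => (U (Fin.last r) ω, pre U r (Nat.le_succ r) ω)) :=
      cmi_congr_right p _ _ _ _ _ snoc_inj hsnocfun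
    have hC : mi p (fun ω => (X ω, Y ω))
          (fun ω => (U (Fin.last r) ω, pre U r (Nat.le_succ r) ω))
        = mi p (fun ω => (X ω, Y ω)) (pre U r (Nat.le_succ r))
          + cmi p (fun ω => (X ω, Y ω)) (U (Fin.last r)) (pre U r (Nat.le_succ r)) :=
      mi_pair_right p _ _ _
    have hc1 : cmi p (fun ω => (X ω, Y ω)) (U (Fin.last r)) (pre U r (Nat.le_succ r))
        = cmi p (U (Fin.last r)) (fun ω => (X ω, Y ω)) (pre U r (Nat.le_succ r)) :=
      cmi_comm p _ _ _
    rw [Fin.sum_univ_castSucc]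
    have hcast : (∑ i : Fin r, if Even (Fin.castSucc i).val
          then cmi p X (U (Fin.castSucc i))
            (fun ω => (Y ω, pre U (Fin.castSucc i).val (Fin.castSucc i).isLt.le ω))
          else cmi p Y (U (Fin.castSucc i))
            (fun ω => (X ω, pre U (Fin.castSucc i).val (Fin.castSucc i).isLt.le ω)))
        = ∑ j : Fin r, if Even j.val
            then cmi p X ((fun i : Fin r => U i.castSucc) j)
              (fun ω => (Y ω, pre (fun i : Fin r => U i.castSucc) j.val j.isLt.le ω))
            else cmi p Y ((fun i : Fin r => U i.castSucc) j)
              (fun ω => (X ω, pre (fun i : Fin r => U i.castSucc) j.val j.isLt.le ω)) := by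
      apply Finset.sum_congr rfl
      intro j _
      rw [pre_castSucc U j.val j.isLt.le]
      rfl
    rw [hcast]
    by_cases hE : Even r
    · have hlast : (if Even (Fin.last r).val
            then cmi p X (U (Fin.last r))
              (fun ω => (Y ω, pre U (Fin.last r).val (Fin.last r).isLt.le ω))
            else cmi p Y (U (Fin.last r))
              (fun ω => (X ω, pre U (Fin.last r).val (Fin.last r).isLt.le ω)))
          = cmi p X (U (Fin.last r)) (fun ω => (Y ω, pre U r (Nat.le_succ r) ω)) := by
        show (if Even r
            then cmi p X (U (Fin.last r)) (fun ω => (Y ω, pre U r (Nat.le_succ r) ω))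
            else cmi p Y (U (Fin.last r)) (fun ω => (X ω, pre U r (Nat.le_succ r) ω))) = _
        rw [if_pos hE]
      rw [hlast]
      have h1e : cmi p (U (Fin.last r)) Y (fun ω => (X ω, pre U r (Nat.le_succ r) ω)) = 0 :=
        (h1 (Fin.last r)).1 hE
      have hsplit : cmi p (U (Fin.last r)) (fun ω => (X ω, Y ω)) (pre U r (Nat.le_succ r))
          = cmi p (U (Fin.last r)) X (pre U r (Nat.le_succ r))
            + cmi p (U (Fin.last r)) Y (fun ω => (X ω, pre U r (Nat.le_succ r) ω)) :=
        cmi_pair_right p _ _ _ _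
      have hc2 : cmi p (U (Fin.last r)) X (pre U r (Nat.le_succ r))
          = cmi p X (U (Fin.last r)) (pre U r (Nat.le_succ r)) := cmi_comm p _ _ _
      have hx1 : cmi p X (fun ω => (Y ω, U (Fin.last r) ω)) (pre U r (Nat.le_succ r))
          = cmi p X Y (pre U r (Nat.le_succ r))
            + cmi p X (U (Fin.last r)) (fun ω => (Y ω, pre U r (Nat.le_succ r) ω)) :=
        cmi_pair_right p _ _ _ _
      have hx2 : cmi p X (fun ω => (Y ω, U (Fin.last r) ω)) (pre U r (Nat.le_succ r))
          = cmi p X (fun ω => (U (Fin.last r) ω, Y ω)) (pre U r (Nat.le_succ r)) :=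
        cmi_swap_right p _ _ _ _
      have hx3 : cmi p X (fun ω => (U (Fin.last r) ω, Y ω)) (pre U r (Nat.le_succ r))
          = cmi p X (U (Fin.last r)) (pre U r (Nat.le_succ r))
            + cmi p X Y (fun ω => (U (Fin.last r) ω, pre U r (Nat.le_succ r) ω)) :=
        cmi_pair_right p _ _ _ _
      linarith [ihh, hA, hB, hC, hc1, h1e, hsplit, hc2, hx1, hx2, hx3]
    · have hlast : (if Even (Fin.last r).val
            then cmi p X (U (Fin.last r))
              (fun ω => (Y ω, pre U (Fin.last r).val (Fin.last r).isLt.le ω))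
            else cmi p Y (U (Fin.last r))
              (fun ω => (X ω, pre U (Fin.last r).val (Fin.last r).isLt.le ω)))
          = cmi p Y (U (Fin.last r)) (fun ω => (X ω, pre U r (Nat.le_succ r) ω)) := by
        show (if Even r
            then cmi p X (U (Fin.last r)) (fun ω => (Y ω, pre U r (Nat.le_succ r) ω))
            else cmi p Y (U (Fin.last r)) (fun ω => (X ω, pre U r (Nat.le_succ r) ω))) = _
        rw [if_neg hE]
      rw [hlast]
      have h1o : cmi p (U (Fin.last r)) X (fun ω => (Y ω, pre U r (Nat.le_succ r) ω)) = 0 :=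
        (h1 (Fin.last r)).2 hE
      have hswap0 : cmi p (U (Fin.last r)) (fun ω => (X ω, Y ω)) (pre U r (Nat.le_succ r))
          = cmi p (U (Fin.last r)) (fun ω => (Y ω, X ω)) (pre U r (Nat.le_succ r)) :=
        cmi_swap_right p _ _ _ _
      have hsplit : cmi p (U (Fin.last r)) (fun ω => (Y ω, X ω)) (pre U r (Nat.le_succ r))
          = cmi p (U (Fin.last r)) Y (pre U r (Nat.le_succ r))
            + cmi p (U (Fin.last r)) X (fun ω => (Y ω, pre U r (Nat.le_succ r) ω)) :=
        cmi_pair_right p _ _ _ _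
      have hc2 : cmi p (U (Fin.last r)) Y (pre U r (Nat.le_succ r))
          = cmi p Y (U (Fin.last r)) (pre U r (Nat.le_succ r)) := cmi_comm p _ _ _
      have hy1 : cmi p Y (fun ω => (X ω, U (Fin.last r) ω)) (pre U r (Nat.le_succ r))
          = cmi p Y X (pre U r (Nat.le_succ r))
            + cmi p Y (U (Fin.last r)) (fun ω => (X ω, pre U r (Nat.le_succ r) ω)) :=
        cmi_pair_right p _ _ _ _
      have hy2 : cmi p Y (fun ω => (X ω, U (Fin.last r) ω)) (pre U r (Nat.le_succ r))
          = cmi p Y (fun ω => (U (Fin.last r) ω, X ω)) (pre U r (Nat.le_succ r)) :=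
        cmi_swap_right p _ _ _ _
      have hy3 : cmi p Y (fun ω => (U (Fin.last r) ω, X ω)) (pre U r (Nat.le_succ r))
          = cmi p Y (U (Fin.last r)) (pre U r (Nat.le_succ r))
            + cmi p Y X (fun ω => (U (Fin.last r) ω, pre U r (Nat.le_succ r) ω)) :=
        cmi_pair_right p _ _ _ _
      have hxy1 : cmi p Y X (pre U r (Nat.le_succ r))
          = cmi p X Y (pre U r (Nat.le_succ r)) := cmi_comm p _ _ _
      have hxy2 : cmi p Y X (fun ω => (U (Fin.last r) ω, pre U r (Nat.le_succ r) ω))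
          = cmi p X Y (fun ω => (U (Fin.last r) ω, pre U r (Nat.le_succ r) ω)) :=
        cmi_comm p _ _ _
      linarith [ihh, hA, hB, hC, hc1, h1o, hswap0, hsplit, hc2, hy1, hy2, hy3, hxy1, hxy2]


end helpers

/-- Decomposition: `I(X,Y ∧ U^r) - I(X ∧ Y)` equals the total interactive-communication rate
`Σ_{i odd} I(X ∧ U_i | Y, U^{i-1}) + Σ_{i even} I(Y ∧ U_i | X, U^{i-1})`. -/
theorem stmt11 {Ω 𝒳 𝒴 𝒰 : Type*} [Fintype Ω] [Fintype 𝒳] [Fintype 𝒴] [Fintype 𝒰] {r : ℕ}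
    (p : Ω → ℝ) (hp : IsPMF p) (X : Ω → 𝒳) (Y : Ω → 𝒴) (U : Fin r → Ω → 𝒰)
    (h1 : P1cond p X Y U) (h2 : P2cond p X Y U) :
    mi p (fun ω => (X ω, Y ω)) (pre U r le_rfl) - mi p X Y
      = ∑ j : Fin r,
          if Even j.val
          then cmi p X (U j) (fun ω => (Y ω, pre U j.val j.isLt.le ω))
          else cmi p Y (U j) (fun ω => (X ω, pre U j.val j.isLt.le ω)) := by
  have h := stmt11_aux r U p hp X Y h1
  rw [P2cond] at h2
  linarith [h, h2]
end
end
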